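/- There exists a polynomial q with natural-number coefficients such that for every natural number i ≥ 0 and every finite set L with |L| ≥ 2^i, there exists a bipartite graph (L, R, E) such that: |R| = 2^(i+2); every vertex x ∈ L has degree at most q(⌈log₂ |L|⌉) (the bound does not depend on i); and every subset S ⊆ L with |S| ≥ 2^i has at least 2^(i+1) neighbors in R, i.e. |E(S)| ≥ 2^(i+1). -/

import Mathlib

/-- The set of neighbors of a set `S` of left vertices in the bipartite graph
with edge relation `E`. -/
def nbhd {α β : Type*} (E : Set (α × β)) (S : Set α) : Set β :=
  {y | ∃ x ∈ S, (x, y) ∈ E}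

open Finset in
/-- Probabilistic existence of the disperser, in finite form. -/
lemma disperser_core (ι : Type) [Fintype ι] (i m : ℕ)
    (hn : Fintype.card ι ≤ 2 ^ m) :
    ∃ F : ι → Fin (m + 5) → Fin (2 ^ (i + 2)),
      ∀ S : Finset ι, S.card = 2 ^ i →
        2 ^ (i + 1) ≤ (S.biUnion fun x => Finset.image (F x) Finset.univ).card := by
  classical
  set n := Fintype.card ι with hndef
  set K := 2 ^ i with hKdef
  set d := m + 5 with hddef
  set R4 := 2 ^ (i + 2) with hR4def
  have hR4eq : R4 = 2 * (2 * K) := by rw [hR4def, hKdef]; ring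
  have hKpos : 0 < K := Nat.pow_pos (by norm_num)
  have hR4pos : 0 < R4 := Nat.pow_pos (by norm_num)
  -- the bad sets
  set badset : Finset ι → Finset (Fin R4) → Finset (ι → Fin d → Fin R4) :=
    fun S T => Fintype.piFinset fun x =>
      if x ∈ S then Fintype.piFinset (fun _ : Fin d => T) else Finset.univ
    with hbadsetdef
  have hbadcard : ∀ (S : Finset ι) (T : Finset (Fin R4)),
      (badset S T).card = (T.card ^ d) ^ S.card * (R4 ^ d) ^ (n - S.card) := by
    intro S T
    rw [hbadsetdef]
    simp only [Fintype.card_piFinset]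
    rw [← Finset.prod_sdiff (Finset.subset_univ S)]
    have h1 : ∀ x ∈ S,
        (if x ∈ S then Fintype.piFinset (fun _ : Fin d => T) else
          (Finset.univ : Finset (Fin d → Fin R4))).card = T.card ^ d := by
      intro x hx
      rw [if_pos hx, Fintype.card_piFinset]
      simp
    have h2 : ∀ x ∈ Finset.univ \ S,
        (if x ∈ S then Fintype.piFinset (fun _ : Fin d => T) else
          (Finset.univ : Finset (Fin d → Fin R4))).card = R4 ^ d := by
      intro x hx
      rw [Finset.mem_sdiff] at hx
      rw [if_neg hx.2]
      simp [Fintype.card_pi_const]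
    rw [Finset.prod_congr rfl h1, Finset.prod_congr rfl h2,
      Finset.prod_const, Finset.prod_const, Finset.card_sdiff_of_subset (Finset.subset_univ S),
      Finset.card_univ]
    ring
  set bad : Finset (ι → Fin d → Fin R4) :=
    (Finset.univ.powersetCard K ×ˢ Finset.univ.powersetCard (2 * K)).biUnion
      fun p => badset p.1 p.2 with hbaddef
  -- count the bad functions
  have hchoose1 : n.choose K ≤ 2 ^ (m * K) := by
    calc n.choose K ≤ n ^ K := Nat.choose_le_pow n K
      _ ≤ (2 ^ m) ^ K := Nat.pow_le_pow_left hn K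
      _ = 2 ^ (m * K) := by rw [← pow_mul]
  have hchoose2 : R4.choose (2 * K) ≤ 2 ^ R4 := by
    have h2K : 2 * K ∈ Finset.range (R4 + 1) := by
      rw [Finset.mem_range]
      omega
    calc R4.choose (2 * K) ≤ ∑ j ∈ Finset.range (R4 + 1), R4.choose j :=
          Finset.single_le_sum (fun j _ => Nat.zero_le _) h2K
      _ = 2 ^ R4 := Nat.sum_range_choose R4
  have hR4K : R4 = 4 * K := by rw [hR4def, hKdef]; ring
  have hkey : n.choose K * R4.choose (2 * K) * ((2 * K) ^ d) ^ K
      < (2 ^ d) ^ K * ((2 * K) ^ d) ^ K := by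
    calc n.choose K * R4.choose (2 * K) * ((2 * K) ^ d) ^ K
        ≤ 2 ^ (m * K) * 2 ^ (4 * K) * ((2 * K) ^ d) ^ K := by
          apply Nat.mul_le_mul_right
          apply Nat.mul_le_mul hchoose1
          rw [← hR4K]
          exact hchoose2
      _ = 2 ^ ((m + 4) * K) * ((2 * K) ^ d) ^ K := by
          rw [← pow_add]; ring_nf
      _ < 2 ^ (d * K) * ((2 * K) ^ d) ^ K := by
          refine (Nat.mul_lt_mul_right ?_).mpr ?_
          · exact Nat.pow_pos (Nat.pow_pos (by omega))
          · refine Nat.pow_lt_pow_right (by norm_num) ?_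
            exact (Nat.mul_lt_mul_right hKpos).mpr (by omega)
      _ = (2 ^ d) ^ K * ((2 * K) ^ d) ^ K := by rw [pow_mul]
  have hbadlt : bad.card < Fintype.card (ι → Fin d → Fin R4) := by
    have hΩ : Fintype.card (ι → Fin d → Fin R4) = (R4 ^ d) ^ n := by
      rw [Fintype.card_fun, Fintype.card_pi_const, Fintype.card_fin]
    rcases le_or_gt K n with hKn | hKn
    · calc bad.card
          ≤ ∑ p ∈ Finset.univ.powersetCard K ×ˢ Finset.univ.powersetCard (2 * K),
              (badset p.1 p.2).card := Finset.card_biUnion_le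
        _ ≤ ∑ _p ∈ Finset.univ.powersetCard K ×ˢ Finset.univ.powersetCard (2 * K),
              ((2 * K) ^ d) ^ K * (R4 ^ d) ^ (n - K) := by
            apply Finset.sum_le_sum
            intro p hp
            rw [Finset.mem_product, Finset.mem_powersetCard, Finset.mem_powersetCard] at hp
            rw [hbadcard p.1 p.2, hp.1.2, hp.2.2]
        _ = n.choose K * R4.choose (2 * K) * (((2 * K) ^ d) ^ K * (R4 ^ d) ^ (n - K)) := by
            rw [Finset.sum_const, Finset.card_product, Finset.card_powersetCard,
              Finset.card_powersetCard, Finset.card_univ, Finset.card_univ,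
              Fintype.card_fin, smul_eq_mul, mul_assoc]
        _ = (n.choose K * R4.choose (2 * K) * ((2 * K) ^ d) ^ K) * (R4 ^ d) ^ (n - K) := by
            ring
        _ < ((2 ^ d) ^ K * ((2 * K) ^ d) ^ K) * (R4 ^ d) ^ (n - K) := by
            refine (Nat.mul_lt_mul_right ?_).mpr hkey
            exact Nat.pow_pos (Nat.pow_pos hR4pos)
        _ = (R4 ^ d) ^ K * (R4 ^ d) ^ (n - K) := by
            rw [← Nat.mul_pow, ← Nat.mul_pow, ← hR4eq]
        _ = (R4 ^ d) ^ n := by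
            rw [← pow_add, Nat.add_sub_cancel' hKn]
        _ = Fintype.card (ι → Fin d → Fin R4) := hΩ.symm
    · -- K > n : no subset of size K exists, so `bad` is empty
      have hempty : (Finset.univ : Finset ι).powersetCard K = ∅ := by
        rw [Finset.powersetCard_eq_empty, Finset.card_univ]
        exact hKn
      have : bad = ∅ := by
        rw [hbaddef, hempty]
        simp
      rw [this, hΩ]
      simp only [Finset.card_empty]
      exact Nat.pow_pos (Nat.pow_pos hR4pos)
  -- extract a good function
  have hex : ∃ F : ι → Fin d → Fin R4, F ∉ bad := by
    by_contra h
    push_neg at h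
    have : bad = Finset.univ := Finset.eq_univ_iff_forall.mpr h
    rw [this, Finset.card_univ] at hbadlt
    exact lt_irrefl _ hbadlt
  obtain ⟨F, hF⟩ := hex
  refine ⟨F, fun S hS => ?_⟩
  by_contra hcon
  push_neg at hcon
  set N := S.biUnion fun x => Finset.image (F x) Finset.univ with hNdef
  have hNle : N.card ≤ 2 * K := by
    have : (2 : ℕ) ^ (i + 1) = 2 * K := by rw [hKdef]; ring
    omega
  obtain ⟨T, hNT, hTcard⟩ :=
    Finset.exists_superset_card_eq hNle (by rw [Fintype.card_fin]; omega)
  apply hF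
  rw [hbaddef]
  apply Finset.mem_biUnion.mpr
  refine ⟨(S, T), ?_, ?_⟩
  · rw [Finset.mem_product, Finset.mem_powersetCard, Finset.mem_powersetCard]
    exact ⟨⟨Finset.subset_univ _, hS⟩, ⟨Finset.subset_univ _, hTcard⟩⟩
  · rw [hbadsetdef]
    apply Fintype.mem_piFinset.mpr
    intro x
    by_cases hx : x ∈ S
    · rw [if_pos hx]
      apply Fintype.mem_piFinset.mpr
      intro t
      apply hNT
      rw [hNdef]
      exact Finset.mem_biUnion.mpr ⟨x, hx, Finset.mem_image_of_mem _ (Finset.mem_univ t)⟩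
    · rw [if_neg hx]
      exact Finset.mem_univ _

/-- variant disperser: There is a polynomial `q` with natural coefficients
such that for every `i ≥ 0` and finite set `L` with `|L| ≥ 2^i` there is a bipartite
graph `(L, R, E)` with `|R| = 2^(i+2)`, left degrees at most `q(⌈log₂ |L|⌉)`,
such that every `S ⊆ L` with `|S| ≥ 2^i` satisfies `|E(S)| ≥ 2^(i+1)`. -/
theorem stmt_2 :
    ∃ q : Polynomial ℕ, ∀ (i : ℕ) (α : Type) (L : Set α), L.Finite → 2 ^ i ≤ L.ncard →
      ∃ (β : Type) (R : Set β) (E : Set (α × β)),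
        R.Finite ∧ R.ncard = 2 ^ (i + 2) ∧
        (∀ p ∈ E, p.1 ∈ L ∧ p.2 ∈ R) ∧
        (∀ x ∈ L, (nbhd E {x}).ncard ≤ q.eval (Nat.clog 2 L.ncard)) ∧
        (∀ S ⊆ L, 2 ^ i ≤ S.ncard → 2 ^ (i + 1) ≤ (nbhd E S).ncard) := by
  classical
  refine ⟨Polynomial.X + Polynomial.C 5, fun i α L hLfin hLcard => ?_⟩
  set m := Nat.clog 2 L.ncard with hmdef
  haveI : Fintype ↥L := hLfin.fintype
  have hcardL : Fintype.card ↥L = L.ncard := by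
    rw [Set.ncard_eq_toFinset_card', Set.toFinset_card]
  have hn : Fintype.card ↥L ≤ 2 ^ m := by
    rw [hcardL]
    exact Nat.le_pow_clog one_lt_two _
  obtain ⟨F, hF⟩ := disperser_core ↥L i m hn
  refine ⟨Fin (2 ^ (i + 2)), Set.univ,
    {p : α × Fin (2 ^ (i + 2)) | ∃ h : p.1 ∈ L, ∃ t, F ⟨p.1, h⟩ t = p.2}, ?_, ?_, ?_, ?_, ?_⟩
  · exact Set.finite_univ
  · rw [Set.ncard_univ, Nat.card_eq_fintype_card, Fintype.card_fin]
  · rintro p ⟨h, -⟩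
    exact ⟨h, Set.mem_univ _⟩
  · intro x hx
    have hsub : nbhd {p : α × Fin (2 ^ (i + 2)) | ∃ h : p.1 ∈ L, ∃ t, F ⟨p.1, h⟩ t = p.2} {x}
        ⊆ Set.range (F ⟨x, hx⟩) := by
      rintro y ⟨x', hx', h', t, ht⟩
      rw [Set.mem_singleton_iff] at hx'
      subst hx'
      exact ⟨t, ht⟩
    have hb : (nbhd {p : α × Fin (2 ^ (i + 2)) | ∃ h : p.1 ∈ L, ∃ t, F ⟨p.1, h⟩ t = p.2}
        {x}).ncard ≤ m + 5 := by
      calc (nbhd {p : α × Fin (2 ^ (i + 2)) | ∃ h : p.1 ∈ L, ∃ t, F ⟨p.1, h⟩ t = p.2}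
              {x}).ncard
          ≤ (Set.range (F ⟨x, hx⟩)).ncard := Set.ncard_le_ncard hsub (Set.finite_range _)
        _ = (Finset.image (F ⟨x, hx⟩) Finset.univ).card := by
            rw [← Set.ncard_coe_finset]
            congr 1
            ext y
            simp
        _ ≤ (Finset.univ : Finset (Fin (m + 5))).card := Finset.card_image_le
        _ = m + 5 := by rw [Finset.card_univ, Fintype.card_fin]
    simpa using hb
  · intro S hSL hScard
    obtain ⟨S', hS'S, hS'card⟩ := Set.exists_subset_card_eq hScard
    have hS'L : S' ⊆ L := hS'S.trans hSL
    have hS'fin : S'.Finite := hLfin.subset hS'L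
    haveI : Fintype ↥S' := hS'fin.fintype
    set T : Finset ↥L := Finset.image (fun x : ↥S' => (⟨↑x, hS'L x.2⟩ : ↥L)) Finset.univ
      with hTdef
    have hTcard : T.card = 2 ^ i := by
      rw [hTdef, Finset.card_image_of_injective _
        (fun a b hab => Subtype.ext (by simpa [Subtype.ext_iff] using hab)),
        Finset.card_univ, ← hS'card, Set.ncard_eq_toFinset_card', Set.toFinset_card]
    have hN := hF T hTcard
    have hsub : (↑(T.biUnion fun x => Finset.image (F x) Finset.univ) :
        Set (Fin (2 ^ (i + 2)))) ⊆
        nbhd {p : α × Fin (2 ^ (i + 2)) | ∃ h : p.1 ∈ L, ∃ t, F ⟨p.1, h⟩ t = p.2} S := by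
      intro y hy
      rw [Finset.mem_coe, Finset.mem_biUnion] at hy
      obtain ⟨x, hxT, hyx⟩ := hy
      rw [Finset.mem_image] at hyx
      obtain ⟨t, -, ht⟩ := hyx
      rw [hTdef, Finset.mem_image] at hxT
      obtain ⟨x', -, hx'⟩ := hxT
      subst hx'
      exact ⟨↑x', hS'S x'.2, hS'L x'.2, t, ht⟩
    calc (2 : ℕ) ^ (i + 1) ≤ (T.biUnion fun x => Finset.image (F x) Finset.univ).card := hN
      _ = (↑(T.biUnion fun x => Finset.image (F x) Finset.univ) :
            Set (Fin (2 ^ (i + 2)))).ncard := (Set.ncard_coe_finset _).symm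
      _ ≤ _ := Set.ncard_le_ncard hsub (Set.toFinite _)
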